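/- Let a, b, c, d be positive real numbers with ε₁a + ε₂b + ε₃c + ε₄d ≠ 0 for every choice of signs εᵢ ∈ {+1, −1}, and suppose (a+b−c−d)(a−b+c−d)(a−b−c+d) < 0. Then for every complex number w with |w| = ac/(bd), there exist exactly two normalized configurations (v₃, v₄), i.e. exactly two pairs with |v₃ − a| = b, |v₄ − v₃| = c, |v₄| = d and R(0, a, v₃, v₄) = w. -/

import Mathlib

/-- The uniformizer `R(V) = [v₁,v₃;v₂,v₄]` of a planar quadrilateral. -/
noncomputable def uniformizer (v₁ v₂ v₃ v₄ : ℂ) : ℂ :=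
  ((v₂ - v₁) / (v₂ - v₃)) * ((v₄ - v₃) / (v₄ - v₁))

/-- Non-degeneracy of the linkage `Q(a,b,c,d)`. -/
def NonDeg (a b c d : ℝ) : Prop :=
  ∀ ε₁ ε₂ ε₃ ε₄ : ℝ, (ε₁ = 1 ∨ ε₁ = -1) → (ε₂ = 1 ∨ ε₂ = -1) →
    (ε₃ = 1 ∨ ε₃ = -1) → (ε₄ = 1 ∨ ε₄ = -1) →
    ε₁ * a + ε₂ * b + ε₃ * c + ε₄ * d ≠ 0

theorem stmt_7 (a b c d : ℝ) (ha : 0 < a) (hb : 0 < b) (hc : 0 < c) (hd : 0 < d)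
    (hnd : NonDeg a b c d)
    (hneg : (a + b - c - d) * (a - b + c - d) * (a - b - c + d) < 0)
    (w : ℂ) (hw : ‖w‖ = a * c / (b * d)) :
    Set.encard {p : ℂ × ℂ |
        ‖p.1 - (a : ℂ)‖ = b ∧ ‖p.2 - p.1‖ = c ∧
        ‖p.2‖ = d ∧ uniformizer 0 (a : ℂ) p.1 p.2 = w} = 2 := by
  have ha0 : (a:ℂ) ≠ 0 := by exact_mod_cast ha.ne'
  have hb0 : (b:ℂ) ≠ 0 := by exact_mod_cast hb.ne'
  have hc0 : (c:ℂ) ≠ 0 := by exact_mod_cast hc.ne'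
  have hd0 : (d:ℂ) ≠ 0 := by exact_mod_cast hd.ne'
  have had : a ≠ d ∨ b ≠ c := by
    by_contra h
    push_neg at h
    exact hnd 1 1 (-1) (-1) (Or.inl rfl) (Or.inl rfl) (Or.inr rfl) (Or.inr rfl)
      (by rw [h.1, h.2]; ring)
  have hw0 : w ≠ 0 := by
    intro h
    rw [h, norm_zero] at hw
    have : 0 < a * c / (b * d) := by positivity
    rw [← hw] at this; exact lt_irrefl _ this
  -- the unit complex number u with w = -(a c)/(b d) * u
  set u : ℂ := ((-(b*d)/(a*c) : ℝ) : ℂ) * w with hu_def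
  have huw : (a:ℂ) * c * u = -((b:ℂ) * d * w) := by
    rw [hu_def]
    push_cast
    field_simp
  have hu : ‖u‖ = 1 := by
    rw [hu_def, norm_mul, Complex.norm_real, Real.norm_eq_abs, hw, abs_div, abs_neg, abs_of_pos (by positivity),
      abs_of_pos (by positivity)]
    field_simp
  have hnsu : Complex.normSq u = 1 := by
    rw [← Complex.sq_norm, hu]; norm_num
  have hu' : u.re^2 + u.im^2 = 1 := by simpa [Complex.normSq_apply, sq] using hnsu
  have hure : -1 ≤ u.re := by
    have := abs_le.mp ((Complex.abs_re_le_norm u).trans_eq hu)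
    exact this.1
  set β : ℂ := ((2*a*d : ℝ):ℂ) + ((2*b*c : ℝ):ℂ) * u with hβ_def
  set k : ℝ := a^2 + d^2 - b^2 - c^2 with hk_def
  have hβns : Complex.normSq β = 4*a^2*d^2 + 4*b^2*c^2 + 8*a*b*c*d*u.re := by
    rw [hβ_def]
    simp only [Complex.normSq_apply, Complex.add_re, Complex.add_im, Complex.mul_re,
      Complex.mul_im, Complex.ofReal_re, Complex.ofReal_im]
    linear_combination (4*b^2*c^2)*hu'
  have hkey : k^2 < Complex.normSq β := by
    rw [hβns, hk_def]
    have h1 : 4*(a*d - b*c)^2 - (a^2+d^2-b^2-c^2)^2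
        = -(a+b+c+d)*((a+b-c-d)*(a-b+c-d)*(a-b-c+d)) := by ring
    nlinarith [mul_pos (mul_pos (mul_pos ha hb) hc) hd, sq_nonneg (a*d-b*c)]
  have hβ0 : β ≠ 0 := by
    intro h
    rw [h, map_zero] at hkey
    nlinarith [sq_nonneg k]
  set s : ℝ := Real.sqrt (Complex.normSq β - k^2) with hs_def
  have hs0 : 0 < s := Real.sqrt_pos.mpr (by linarith)
  have hs2 : s^2 = Complex.normSq β - k^2 := Real.sq_sqrt (by linarith)
  set z₁ : ℂ := ((k:ℂ) + s*Complex.I)/β with hz₁_def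
  set z₂ : ℂ := ((k:ℂ) - s*Complex.I)/β with hz₂_def
  set P : ℂ → ℂ × ℂ :=
    fun z => ((a:ℂ) + b*(((d:ℂ)*z - a)/((b:ℂ)+c*u*z)), (d:ℂ)*z) with hP_def
  -- the normSq identity
  have hid : ∀ z : ℂ, Complex.normSq z = 1 →
      Complex.normSq ((d:ℂ)*z - a) - Complex.normSq ((b:ℂ) + c*u*z) = k - (β * z).re := by
    intro z hz
    have hz' : z.re^2 + z.im^2 = 1 := by simpa [Complex.normSq_apply, sq] using hz
    rw [hβ_def, hk_def]
    simp only [Complex.normSq_apply, Complex.mul_re, Complex.mul_im, Complex.add_re,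
      Complex.add_im, Complex.sub_re, Complex.sub_im, Complex.ofReal_re, Complex.ofReal_im]
    linear_combination (d^2 - c^2*(u.re^2+u.im^2))*hz' - c^2*hu'
  have habs1 : ∀ z : ℂ, Complex.normSq z = 1 → ‖z‖ = 1 := by
    intro z hz
    rw [Complex.norm_def, hz, Real.sqrt_one]
  -- nonvanishing of the denominator
  have hD0 : ∀ z : ℂ, Complex.normSq z = 1 → Complex.normSq ((d:ℂ)*z - a) =
      Complex.normSq ((b:ℂ) + c*u*z) → (b:ℂ) + c*u*z ≠ 0 := by
    intro z hz hnorm hcon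
    rw [hcon, map_zero] at hnorm
    have hdz : (d:ℂ)*z = a := by
      have := Complex.normSq_eq_zero.mp hnorm
      linear_combination this
    have h1 : a = d := by
      have h := congrArg (‖·‖) hdz
      rw [norm_mul, Complex.norm_real, Real.norm_eq_abs, Complex.norm_real, Real.norm_eq_abs, habs1 z hz, abs_of_pos hd,
        abs_of_pos ha, mul_one] at h
      exact h.symm
    have h2 : b = c := by
      have hcb : (b:ℂ) = -((c:ℂ)*u*z) := by linear_combination hcon
      have h := congrArg (‖·‖) hcb
      rw [norm_neg, norm_mul, norm_mul, Complex.norm_real, Real.norm_eq_abs, Complex.norm_real, Real.norm_eq_abs, hu,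
        habs1 z hz, abs_of_pos hc, abs_of_pos hb, mul_one, mul_one] at h
      exact h
    rcases had with h | h
    · exact h h1
    · exact h h2
  -- forward: points P z are in the set
  have hfwd : ∀ z : ℂ, Complex.normSq z = 1 → (β * z).re = k →
      ‖(P z).1 - (a:ℂ)‖ = b ∧ ‖(P z).2 - (P z).1‖ = c ∧
      ‖(P z).2‖ = d ∧ uniformizer 0 (a:ℂ) (P z).1 (P z).2 = w := by
    intro z hz hre
    have hnorm : Complex.normSq ((d:ℂ)*z - a) = Complex.normSq ((b:ℂ) + c*u*z) := by
      have := hid z hz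
      rw [hre] at this
      linarith
    have hD := hD0 z hz hnorm
    set ζ : ℂ := ((d:ℂ)*z - a)/((b:ℂ) + c*u*z) with hζ_def
    have hζns : Complex.normSq ζ = 1 := by
      rw [hζ_def, map_div₀, hnorm, div_self]
      intro h
      exact hD (Complex.normSq_eq_zero.mp h)
    have hζabs : ‖ζ‖ = 1 := habs1 _ hζns
    have hζ0 : ζ ≠ 0 := by intro h; rw [h, norm_zero] at hζabs; norm_num at hζabs
    have hzabs := habs1 z hz
    have hz0 : z ≠ 0 := by intro h; rw [h, norm_zero] at hzabs; norm_num at hzabs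
    have hP1 : (P z).1 = (a:ℂ) + b * ζ := rfl
    have hP2 : (P z).2 = (d:ℂ) * z := rfl
    have hdza : (d:ℂ)*z - a = ζ * ((b:ℂ) + c*u*z) := (div_mul_cancel₀ _ hD).symm
    have hsub : (P z).2 - (P z).1 = (c:ℂ) * u * z * ζ := by
      rw [hP1, hP2]
      linear_combination hdza
    refine ⟨?_, ?_, ?_, ?_⟩
    · rw [hP1]
      simp [norm_mul, Complex.norm_real, hζabs, abs_of_pos hb]
    · rw [hsub]
      simp [norm_mul, Complex.norm_real, hu, hζabs, hzabs, abs_of_pos hc]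
    · rw [hP2]
      simp [norm_mul, Complex.norm_real, hzabs, abs_of_pos hd]
    · show ((a:ℂ) - 0)/((a:ℂ) - (P z).1) * (((P z).2 - (P z).1)/((P z).2 - 0)) = w
      rw [hsub, hP1, hP2]
      have h1 : (a:ℂ) - ((a:ℂ) + b*ζ) = -((b:ℂ)*ζ) := by ring
      rw [h1, sub_zero, sub_zero]
      rw [div_mul_div_comm, div_eq_iff (mul_ne_zero (neg_ne_zero.mpr (mul_ne_zero hb0 hζ0))
        (mul_ne_zero hd0 hz0))]
      linear_combination (z*ζ)*huw
  -- extraction: solutions are z₁ or z₂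
  have hextract : ∀ z : ℂ, Complex.normSq z = 1 → (β * z).re = k → z = z₁ ∨ z = z₂ := by
    intro z hz hre
    have hX : Complex.normSq (β * z) = Complex.normSq β := by rw [map_mul, hz, mul_one]
    have him2 : (β*z).im^2 = s^2 := by
      have h5 : (β*z).re^2 + (β*z).im^2 = Complex.normSq β := by
        rw [← hX, Complex.normSq_apply]; ring
      rw [hre] at h5
      rw [hs2]; linarith
    have h6 : ((β*z).im - s) * ((β*z).im + s) = 0 := by linear_combination him2
    rcases mul_eq_zero.mp h6 with h | h
    · left
      have hzb : β * z = (k:ℂ) + s*Complex.I := by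
        apply Complex.ext
        · rw [hre]; simp
        · simp only [Complex.add_im, Complex.ofReal_im, Complex.mul_im, Complex.I_im,
            Complex.I_re, Complex.ofReal_re, mul_one, mul_zero, zero_add, add_zero, zero_mul]
          rw [Complex.mul_im] at h
          linarith
      rw [hz₁_def, ← hzb]
      exact (mul_div_cancel_left₀ z hβ0).symm
    · right
      have hzb : β * z = (k:ℂ) - s*Complex.I := by
        apply Complex.ext
        · rw [hre]; simp
        · simp only [Complex.sub_im, Complex.ofReal_im, Complex.mul_im, Complex.I_im,
            Complex.I_re, Complex.ofReal_re, mul_one, mul_zero, zero_sub, add_zero, zero_mul]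
          rw [Complex.mul_im] at h
          linarith
      rw [hz₂_def, ← hzb]
      exact (mul_div_cancel_left₀ z hβ0).symm
  -- z₁ and z₂ satisfy the circle-line equations
  have hkssq : (k:ℝ)^2 + s^2 = Complex.normSq β := by rw [hs2]; ring
  have hz₁ns : Complex.normSq z₁ = 1 := by
    rw [hz₁_def, map_div₀]
    have h7 : Complex.normSq ((k:ℂ) + s*Complex.I) = k^2 + s^2 := by
      simp [Complex.normSq_apply]; ring
    rw [h7, hkssq, div_self]
    intro h
    exact hβ0 (Complex.normSq_eq_zero.mp h)
  have hz₂ns : Complex.normSq z₂ = 1 := by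
    rw [hz₂_def, map_div₀]
    have h7 : Complex.normSq ((k:ℂ) - s*Complex.I) = k^2 + s^2 := by
      simp [Complex.normSq_apply]; ring
    rw [h7, hkssq, div_self]
    intro h
    exact hβ0 (Complex.normSq_eq_zero.mp h)
  have hz₁re : (β * z₁).re = k := by
    have h8 : β * z₁ = (k:ℂ) + s*Complex.I := by
      rw [hz₁_def]; field_simp
    rw [h8]; simp
  have hz₂re : (β * z₂).re = k := by
    have h8 : β * z₂ = (k:ℂ) - s*Complex.I := by
      rw [hz₂_def]; field_simp
    rw [h8]; simp
  -- the set equality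
  have hset : {p : ℂ × ℂ |
      ‖p.1 - (a : ℂ)‖ = b ∧ ‖p.2 - p.1‖ = c ∧
      ‖p.2‖ = d ∧ uniformizer 0 (a : ℂ) p.1 p.2 = w} = {P z₁, P z₂} := by
    ext p
    simp only [Set.mem_setOf_eq, Set.mem_insert_iff, Set.mem_singleton_iff]
    constructor
    · rintro ⟨h1, h2, h3, h4⟩
      have hp₂0 : p.2 ≠ 0 := by
        intro h; rw [h, norm_zero] at h3; exact hd.ne h3
      have hp₁a : p.1 - (a:ℂ) ≠ 0 := by
        intro h; rw [h, norm_zero] at h1; exact hb.ne h1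
      have hap : (a:ℂ) - p.1 ≠ 0 := by
        intro h; exact hp₁a (by linear_combination -h)
      set z : ℂ := p.2 / (d:ℂ) with hzdef
      have hzp : p.2 = (d:ℂ) * z := by rw [hzdef]; field_simp
      have hzns : Complex.normSq z = 1 := by
        have h9 : Complex.normSq p.2 = d * d := by
          rw [← Complex.sq_norm, h3]; ring
        rw [hzdef, map_div₀, h9, Complex.normSq_ofReal, div_self (by positivity)]
      set ζ : ℂ := (p.1 - (a:ℂ)) / (b:ℂ) with hζdef
      have hζp : p.1 = (a:ℂ) + b * ζ := by rw [hζdef]; field_simp; ring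
      have hζns : Complex.normSq ζ = 1 := by
        have h9 : Complex.normSq (p.1 - (a:ℂ)) = b * b := by
          rw [← Complex.sq_norm, h1]; ring
        rw [hζdef, map_div₀, h9, Complex.normSq_ofReal, div_self (by positivity)]
      have h4' : (a:ℂ) * (p.2 - p.1) = w * ((a:ℂ) - p.1) * p.2 := by
        rw [uniformizer, sub_zero, sub_zero] at h4
        field_simp at h4
        linear_combination h4
      have hkey2 : p.2 - p.1 = (c:ℂ) * u * z * ζ := by
        have h6 : (a:ℂ) * (p.2 - p.1) = (a:ℂ) * ((c:ℂ)*u*z*ζ) := by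
          rw [hzdef, hζdef]
          have e : (a:ℂ)*((c:ℂ)*u*(p.2/d)*((p.1-a)/b)) = (a*c*u)*p.2*(p.1-a)/(d*b) := by ring
          rw [e, huw, h4', eq_div_iff (mul_ne_zero hd0 hb0)]
          ring
        exact mul_left_cancel₀ ha0 h6
      have hDz : (d:ℂ)*z - a = ζ * ((b:ℂ) + c*u*z) := by
        linear_combination hkey2 + hζp - hzp
      have hnorm : Complex.normSq ((d:ℂ)*z - a) = Complex.normSq ((b:ℂ) + c*u*z) := by
        rw [hDz, map_mul, hζns, one_mul]
      have hre : (β*z).re = k := by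
        have := hid z hzns
        rw [hnorm] at this
        linarith
      have hD := hD0 z hzns hnorm
      have hPz : p = P z := by
        rw [Prod.ext_iff, hP_def]
        refine ⟨?_, hzp⟩
        simp only
        rw [hDz, mul_div_cancel_right₀ _ hD]
        exact hζp
      rcases hextract z hzns hre with h | h
      · left; rw [hPz, h]
      · right; rw [hPz, h]
    · rintro (rfl | rfl)
      · exact hfwd z₁ hz₁ns hz₁re
      · exact hfwd z₂ hz₂ns hz₂re
  rw [hset]
  have hz12 : z₁ ≠ z₂ := by
    rw [hz₁_def, hz₂_def]
    intro h
    rw [div_eq_div_iff hβ0 hβ0] at h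
    have h10 := mul_right_cancel₀ hβ0 h
    have h11 : ((2*s:ℝ):ℂ)*Complex.I = 0 := by push_cast; linear_combination h10
    rcases mul_eq_zero.mp h11 with h12 | h12
    · have : (2*s:ℝ) = 0 := by exact_mod_cast h12
      linarith
    · exact Complex.I_ne_zero h12
  have hPne : P z₁ ≠ P z₂ := by
    intro h
    apply hz12
    have h13 := congrArg Prod.snd h
    simp only [hP_def] at h13
    exact mul_left_cancel₀ hd0 h13
  exact Set.encard_pair hPne
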